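/- Let f : [a,b] ⊆ [0,∞) → [0,∞) be continuous and s-convex in the second sense for s ∈ (0,1], 0 ≤ a < b, p > 0. Then ∫_a^b (x-a)^p (b-x)^p f(x) f(a+b-x) dx ≤ ((b-a)^{2p+1}/2) { 2(f(a)^2+f(b)^2) B(p+1, 2s+p+1) + 4 f(a) f(b) B(p+s+1, p+s+1) }. -/

import Mathlib

open MeasureTheory Set

noncomputable def eulerBeta (m n : ℝ) : ℝ := ∫ t in (0:ℝ)..1, t ^ (m - 1) * (1 - t) ^ (n - 1)

private lemma rpow_cont {r : ℝ} (hr : 0 ≤ r) : Continuous fun x : ℝ => x ^ r :=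
  continuous_iff_continuousAt.2 fun x => Real.continuousAt_rpow_const x r (Or.inr hr)

private lemma beta_symm (m n : ℝ) : eulerBeta m n = eulerBeta n m := by
  unfold eulerBeta
  have h := intervalIntegral.integral_comp_sub_left (a := (0:ℝ)) (b := 1)
      (fun x : ℝ => x ^ (n - 1) * (1 - x) ^ (m - 1)) 1
  norm_num at h
  rw [← h]
  apply intervalIntegral.integral_congr
  intro t ht
  simp only
  ring

theorem cor_2_1 (f : ℝ → ℝ) (a b : ℝ) (ha : 0 ≤ a) (hab : a < b)
    (hf : ContinuousOn f (Icc a b)) (hnn : ∀ x ∈ Icc a b, 0 ≤ f x) (s : ℝ) (hs0 : 0 < s) (hs1 : s ≤ 1)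
    (hsc : ∀ u v : ℝ, 0 ≤ u → 0 ≤ v → ∀ α β : ℝ, 0 ≤ α → 0 ≤ β → α + β = 1 →
      f (α * u + β * v) ≤ α ^ s * f u + β ^ s * f v)
    (p : ℝ) (hp : 0 < p) :
    ∫ x in a..b, (x - a) ^ p * (b - x) ^ p * (f x * f (a + b - x)) ≤
      (b - a) ^ (2 * p + 1) / 2 *
        (2 * (f a ^ 2 + f b ^ 2) * eulerBeta (p + 1) (2 * s + p + 1) +
          4 * f a * f b * eulerBeta (p + s + 1) (p + s + 1)) := by
  have hb0 : 0 ≤ b := le_trans ha hab.le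
  have hc : 0 < b - a := sub_pos.2 hab
  set A : ℝ := f a ^ 2 + f b ^ 2 with hA
  set G : ℝ := f a * f b with hG
  set g : ℝ → ℝ := fun t => A / 2 * (t ^ (2*s) + (1-t) ^ (2*s)) + 2 * G * (t ^ s * (1-t) ^ s)
    with hg
  set H : ℝ → ℝ := fun x => (x - a) ^ p * (b - x) ^ p * g ((x - a)/(b - a)) with hH
  have hfa : 0 ≤ f a := hnn a (left_mem_Icc.2 hab.le)
  have hfb : 0 ≤ f b := hnn b (right_mem_Icc.2 hab.le)
  -- pointwise bound
  have key : ∀ x ∈ Icc a b, f x * f (a + b - x) ≤ g ((x - a)/(b - a)) := by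
    intro x hx
    set t := (x - a)/(b - a) with htdef
    have ht0 : 0 ≤ t := div_nonneg (by linarith [hx.1]) hc.le
    have ht1 : t ≤ 1 := (div_le_one hc).2 (by linarith [hx.2])
    have ht1' : (0:ℝ) ≤ 1 - t := by linarith
    have hx1 : x = t * b + (1 - t) * a := by
      have h' : t * (b - a) = x - a := div_mul_cancel₀ _ (ne_of_gt hc)
      linarith
    have hx2 : a + b - x = (1 - t) * b + t * a := by rw [hx1]; ring
    have h1 : f x ≤ t ^ s * f b + (1 - t) ^ s * f a := by
      nth_rewrite 1 [hx1]
      exact hsc b a hb0 ha t (1 - t) ht0 ht1' (by ring)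
    have h2 : f (a + b - x) ≤ (1 - t) ^ s * f b + t ^ s * f a := by
      nth_rewrite 1 [hx2]
      exact hsc b a hb0 ha (1 - t) t ht1' ht0 (by ring)
    have hxm : a + b - x ∈ Icc a b := ⟨by linarith [hx.2], by linarith [hx.1]⟩
    have hX : 0 ≤ t ^ s := Real.rpow_nonneg ht0 s
    have hY : 0 ≤ (1 - t) ^ s := Real.rpow_nonneg ht1' s
    have hprod : f x * f (a + b - x)
        ≤ (t ^ s * f b + (1 - t) ^ s * f a) * ((1 - t) ^ s * f b + t ^ s * f a) :=
      mul_le_mul h1 h2 (hnn _ hxm) (by positivity)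
    have h2s : t ^ (2*s) = t ^ s * t ^ s := by
      rw [show (2:ℝ)*s = s + s by ring, Real.rpow_add' ht0 (by positivity)]
    have h2s' : (1-t) ^ (2*s) = (1-t) ^ s * (1-t) ^ s := by
      rw [show (2:ℝ)*s = s + s by ring, Real.rpow_add' ht1' (by positivity)]
    refine hprod.trans ?_
    rw [hg]
    simp only
    rw [h2s, h2s', hA, hG]
    nlinarith [sq_nonneg ((t ^ s - (1 - t) ^ s) * (f a - f b))]
  -- continuity helpers
  have cpq : ∀ r q : ℝ, 0 ≤ r → 0 ≤ q → Continuous fun u : ℝ => u ^ r * (1-u) ^ q := by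
    intro r q hr hq
    exact (rpow_cont hr).mul ((rpow_cont hq).comp (continuous_const.sub continuous_id))
  have cg : Continuous g := by
    apply Continuous.add
    · exact continuous_const.mul ((rpow_cont (by positivity : (0:ℝ) ≤ 2*s)).add
        ((rpow_cont (by positivity : (0:ℝ) ≤ 2*s)).comp (continuous_const.sub continuous_id)))
    · exact continuous_const.mul ((rpow_cont hs0.le).mul
        ((rpow_cont hs0.le).comp (continuous_const.sub continuous_id)))
  have cw : Continuous fun x : ℝ => (x - a) ^ p * (b - x) ^ p :=
    ((rpow_cont hp.le).comp (continuous_id.sub continuous_const)).mul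
      ((rpow_cont hp.le).comp (continuous_const.sub continuous_id))
  have cH : Continuous H :=
    cw.mul (cg.comp ((continuous_id.sub continuous_const).div_const _))
  -- integrability of LHS
  have hmaps : MapsTo (fun x : ℝ => a + b - x) (Icc a b) (Icc a b) := by
    intro x hx
    simp only [mem_Icc] at *
    constructor <;> linarith [hx.1, hx.2]
  have hint1 : IntervalIntegrable
      (fun x => (x - a) ^ p * (b - x) ^ p * (f x * f (a + b - x))) volume a b := by
    apply ContinuousOn.intervalIntegrable
    rw [uIcc_of_le hab.le]
    exact cw.continuousOn.mul (hf.mul (hf.comp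
      (continuous_const.sub continuous_id).continuousOn hmaps))
  -- step 1: integral monotonicity
  have step1 : ∫ x in a..b, (x - a) ^ p * (b - x) ^ p * (f x * f (a + b - x))
      ≤ ∫ x in a..b, H x := by
    apply intervalIntegral.integral_mono_on hab.le hint1 (cH.intervalIntegrable _ _)
    intro x hx
    have hw0 : 0 ≤ (x - a) ^ p * (b - x) ^ p :=
      mul_nonneg (Real.rpow_nonneg (by linarith [hx.1]) p)
        (Real.rpow_nonneg (by linarith [hx.2]) p)
    exact mul_le_mul_of_nonneg_left (key x hx) hw0
  -- substitution x = (b-a)*u + a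
  have sub1 : ∫ x in a..b, H x = (b - a) * ∫ u in (0:ℝ)..1, H ((b - a) * u + a) := by
    rw [intervalIntegral.integral_comp_mul_add H (ne_of_gt hc) a]
    rw [smul_eq_mul]
    norm_num [sub_add_cancel]
    rw [← mul_assoc, mul_inv_cancel₀ (ne_of_gt hc), one_mul]
  have sub3 : ∫ u in (0:ℝ)..1, H ((b - a) * u + a)
      = (b - a) ^ (2*p) * ∫ u in (0:ℝ)..1, u ^ p * (1-u) ^ p * g u := by
    rw [← intervalIntegral.integral_const_mul]
    apply intervalIntegral.integral_congr
    intro u hu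
    rw [uIcc_of_le (by norm_num : (0:ℝ) ≤ 1)] at hu
    have hu0 : (0:ℝ) ≤ u := hu.1
    have hu1 : (0:ℝ) ≤ 1 - u := by linarith [hu.2]
    have e1 : (b - a) * u + a - a = (b - a) * u := by ring
    have e2 : b - ((b - a) * u + a) = (b - a) * (1 - u) := by ring
    have e3 : (b - a) * u / (b - a) = u := by field_simp
    rw [hH]
    simp only
    rw [e1, e2, e3, Real.mul_rpow hc.le hu0, Real.mul_rpow hc.le hu1,
      show (2:ℝ)*p = p + p by ring, Real.rpow_add hc]
    ring
  -- compute the model integral via Beta functions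
  have hB1 : (∫ u in (0:ℝ)..1, u ^ (2*s+p) * (1-u) ^ p) = eulerBeta (p+1) (2*s+p+1) := by
    rw [beta_symm]
    unfold eulerBeta
    norm_num
  have hB2 : (∫ u in (0:ℝ)..1, u ^ p * (1-u) ^ (2*s+p)) = eulerBeta (p+1) (2*s+p+1) := by
    unfold eulerBeta
    norm_num
  have hB3 : (∫ u in (0:ℝ)..1, u ^ (p+s) * (1-u) ^ (p+s)) = eulerBeta (p+s+1) (p+s+1) := by
    unfold eulerBeta
    norm_num
  have hJ : ∫ u in (0:ℝ)..1, u ^ p * (1-u) ^ p * g u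
      = A * eulerBeta (p+1) (2*s+p+1) + 2 * G * eulerBeta (p+s+1) (p+s+1) := by
    have e : EqOn (fun u : ℝ => u ^ p * (1-u) ^ p * g u)
        (fun u : ℝ => A/2 * (u ^ (2*s+p) * (1-u) ^ p)
          + (A/2 * (u ^ p * (1-u) ^ (2*s+p)) + 2*G * (u ^ (p+s) * (1-u) ^ (p+s))))
        (uIcc (0:ℝ) 1) := by
      intro u hu
      rw [uIcc_of_le (by norm_num : (0:ℝ) ≤ 1)] at hu
      have hu0 : (0:ℝ) ≤ u := hu.1
      have hu1 : (0:ℝ) ≤ 1 - u := by linarith [hu.2]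
      simp only [hg]
      rw [Real.rpow_add' (y := 2*s) (z := p) hu0 (by positivity),
          Real.rpow_add' (y := 2*s) (z := p) hu1 (by positivity),
          Real.rpow_add' (y := p) (z := s) hu0 (by positivity),
          Real.rpow_add' (y := p) (z := s) hu1 (by positivity)]
      ring
    rw [intervalIntegral.integral_congr e,
        intervalIntegral.integral_add
          (((cpq _ _ (by positivity) hp.le).intervalIntegrable _ _).const_mul _)
          ((((cpq _ _ hp.le (by positivity)).intervalIntegrable _ _).const_mul _).add
            (((cpq _ _ (by positivity) (by positivity)).intervalIntegrable _ _).const_mul _)),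
        intervalIntegral.integral_add
          (((cpq _ _ hp.le (by positivity)).intervalIntegrable _ _).const_mul _)
          (((cpq _ _ (by positivity) (by positivity)).intervalIntegrable _ _).const_mul _),
        intervalIntegral.integral_const_mul, intervalIntegral.integral_const_mul,
        intervalIntegral.integral_const_mul, hB1, hB2, hB3]
    ring
  calc ∫ x in a..b, (x - a) ^ p * (b - x) ^ p * (f x * f (a + b - x))
      ≤ ∫ x in a..b, H x := step1
    _ = (b - a) * ((b - a) ^ (2*p) *
        (A * eulerBeta (p+1) (2*s+p+1) + 2 * G * eulerBeta (p+s+1) (p+s+1))) := by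
        rw [sub1, sub3, hJ]
    _ = (b - a) ^ (2 * p + 1) / 2 *
        (2 * A * eulerBeta (p + 1) (2 * s + p + 1)
          + 4 * f a * f b * eulerBeta (p + s + 1) (p + s + 1)) := by
        rw [Real.rpow_add hc (2*p) 1, Real.rpow_one, hG]
        ring
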